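/- Let S : [0,1] → ℝ be continuous and concave with S(p) = S(1-p), S(0) = S(1) = 0, and suppose S satisfies the associativity identity S(p₁) + (1-p₁)·S(p₂/(1-p₁)) = S(p₁+p₂) + (p₁+p₂)·S(p₁/(p₁+p₂)) whenever p₁,p₂ ≥ 0, p₁+p₂ ≤ 1, p₁ < 1, p₁+p₂ > 0. Then the n-ary extension Sₙ(p₁,...,pₙ) := ∑_{j=1}^{n-1} (1 - ∑_{i<j} pᵢ)·S(pⱼ/(1 - ∑_{i<j} pᵢ)) is a symmetric function on the probability simplex Δ_{n-1}, for every n ≥ 2. -/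

import Mathlib

/-- The `n`-ary extension of a binary information measure `S` by the telescoping formula.
Terms with vanishing denominator are `0` (the factor in front vanishes). -/
noncomputable def Sn (S : ℝ → ℝ) (n : ℕ) (p : ℕ → ℝ) : ℝ :=
  ∑ j ∈ Finset.range (n - 1),
    (1 - ∑ i ∈ Finset.range j, p i) *
      S (p j / (1 - ∑ i ∈ Finset.range j, p i))

/-- One term of the telescoping sum. -/
noncomputable def SnTerm (S : ℝ → ℝ) (p : ℕ → ℝ) (k : ℕ) : ℝ :=
  (1 - ∑ i ∈ Finset.range k, p i) * S (p k / (1 - ∑ i ∈ Finset.range k, p i))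

lemma Sn_def' (S : ℝ → ℝ) (n : ℕ) (p : ℕ → ℝ) :
    Sn S n p = ∑ j ∈ Finset.range (n - 1), SnTerm S p j := rfl

/-- Binary exchange identity. -/
lemma lemA {S : ℝ → ℝ}
    (hsymm : ∀ p ∈ Set.Icc (0 : ℝ) 1, S p = S (1 - p))
    (h0 : S 0 = 0) (h1 : S 1 = 0)
    (hassoc : ∀ p₁ p₂ : ℝ, 0 ≤ p₁ → 0 ≤ p₂ → p₁ + p₂ ≤ 1 → p₁ < 1 → 0 < p₁ + p₂ →
      S p₁ + (1 - p₁) * S (p₂ / (1 - p₁)) =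
        S (p₁ + p₂) + (p₁ + p₂) * S (p₁ / (p₁ + p₂)))
    (x y : ℝ) (hx : 0 ≤ x) (hy : 0 ≤ y) (hxy : x + y ≤ 1) :
    S x + (1 - x) * S (y / (1 - x)) = S y + (1 - y) * S (x / (1 - y)) := by
  rcases eq_or_lt_of_le (add_nonneg hx hy) with h|hpos
  · have hx0 : x = 0 := by linarith
    have hy0 : y = 0 := by linarith
    simp [hx0, hy0, h0]
  · rcases eq_or_lt_of_le (show x ≤ 1 by linarith) with hx1|hx1
    · have hy0 : y = 0 := by linarith
      subst hy0 hx1; norm_num [h0, h1]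
    rcases eq_or_lt_of_le (show y ≤ 1 by linarith) with hy1|hy1
    · have hx0 : x = 0 := by linarith
      subst hx0 hy1; norm_num [h0, h1]
    have e1 := hassoc x y hx hy hxy hx1 hpos
    have e2 := hassoc y x hy hx (by linarith) hy1 (by linarith)
    have hne : x + y ≠ 0 := ne_of_gt hpos
    have hmem : x / (x + y) ∈ Set.Icc (0:ℝ) 1 := by
      constructor
      · positivity
      · rw [div_le_one hpos]; linarith
    have hkey : S (x / (x + y)) = S (y / (x + y)) := by
      rw [hsymm _ hmem]
      congr 1
      field_simp; ring
    rw [add_comm y x] at e2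
    rw [hkey] at e1
    linarith

/-- Scaled binary exchange identity. -/
lemma lemB {S : ℝ → ℝ}
    (hsymm : ∀ p ∈ Set.Icc (0 : ℝ) 1, S p = S (1 - p))
    (h0 : S 0 = 0) (h1 : S 1 = 0)
    (hassoc : ∀ p₁ p₂ : ℝ, 0 ≤ p₁ → 0 ≤ p₂ → p₁ + p₂ ≤ 1 → p₁ < 1 → 0 < p₁ + p₂ →
      S p₁ + (1 - p₁) * S (p₂ / (1 - p₁)) =
        S (p₁ + p₂) + (p₁ + p₂) * S (p₁ / (p₁ + p₂)))
    (t a b : ℝ) (ha : 0 ≤ a) (hb : 0 ≤ b) (hab : a + b ≤ t) :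
    t * S (a / t) + (t - a) * S (b / (t - a)) =
      t * S (b / t) + (t - b) * S (a / (t - b)) := by
  rcases eq_or_lt_of_le (le_trans (add_nonneg ha hb) hab) with ht|ht
  · have ha0 : a = 0 := by linarith
    have hb0 : b = 0 := by linarith
    simp [← ht, ha0, hb0]
  · have htne : t ≠ 0 := ne_of_gt ht
    have key := lemA hsymm h0 h1 hassoc (a / t) (b / t)
      (by positivity) (by positivity)
      (by rw [← add_div, div_le_one ht]; linarith)
    have e1 : t - a = t * (1 - a / t) := by field_simp
    have e2 : t - b = t * (1 - b / t) := by field_simp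
    rw [e1, e2, ← div_div, ← div_div]
    linear_combination t * key

/-- The telescoping sum may be extended by one more (vanishing) term. -/
lemma Sn_eq {S : ℝ → ℝ} (h1 : S 1 = 0) (n : ℕ) (hn : 1 ≤ n) (p : ℕ → ℝ)
    (hsum : ∑ i ∈ Finset.range n, p i = 1) :
    Sn S n p = ∑ j ∈ Finset.range n, SnTerm S p j := by
  obtain ⟨m, rfl⟩ : ∃ m, n = m + 1 := ⟨n - 1, by omega⟩
  rw [Sn_def', Nat.add_sub_cancel, Finset.sum_range_succ]
  have ht : 1 - ∑ i ∈ Finset.range m, p i = p m := by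
    rw [Finset.sum_range_succ] at hsum; linarith
  have : SnTerm S p m = 0 := by
    rw [SnTerm, ht]
    rcases eq_or_ne (p m) 0 with h|h
    · simp [h]
    · rw [div_self h, h1, mul_zero]
  rw [this, add_zero]

/-- Sums over an initial segment are invariant under a swap inside the segment. -/
lemma sum_range_swap (p : ℕ → ℝ) (u v k : ℕ) (hu : u < k) (hv : v < k) :
    ∑ i ∈ Finset.range k, p (Equiv.swap u v i) = ∑ i ∈ Finset.range k, p i := by
  refine Finset.sum_equiv (Equiv.swap u v) ?_ (fun i _ => rfl)
  intro i
  simp only [Finset.mem_range]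
  rcases eq_or_ne i u with rfl|h1
  · rw [Equiv.swap_apply_left]; omega
  rcases eq_or_ne i v with rfl|h2
  · rw [Equiv.swap_apply_right]; omega
  · rw [Equiv.swap_apply_of_ne_of_ne h1 h2]

/-- Invariance of `Sn` under an adjacent transposition. -/
lemma Sn_adj {S : ℝ → ℝ}
    (hsymm : ∀ p ∈ Set.Icc (0 : ℝ) 1, S p = S (1 - p))
    (h0 : S 0 = 0) (h1 : S 1 = 0)
    (hassoc : ∀ p₁ p₂ : ℝ, 0 ≤ p₁ → 0 ≤ p₂ → p₁ + p₂ ≤ 1 → p₁ < 1 → 0 < p₁ + p₂ →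
      S p₁ + (1 - p₁) * S (p₂ / (1 - p₁)) =
        S (p₁ + p₂) + (p₁ + p₂) * S (p₁ / (p₁ + p₂)))
    (n : ℕ) (p : ℕ → ℝ) (hp : ∀ i < n, 0 ≤ p i)
    (hsum : ∑ i ∈ Finset.range n, p i = 1) (j : ℕ) (hj : j + 1 < n) :
    Sn S n (p ∘ Equiv.swap j (j + 1)) = Sn S n p := by
  set q : ℕ → ℝ := p ∘ Equiv.swap j (j + 1) with hq
  have hqj : q j = p (j + 1) := by simp [hq, Equiv.swap_apply_left]
  have hqj1 : q (j + 1) = p j := by simp [hq, Equiv.swap_apply_right]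
  have hqo : ∀ i, i ≠ j → i ≠ j + 1 → q i = p i := fun i hi1 hi2 => by
    simp [hq, Equiv.swap_apply_of_ne_of_ne hi1 hi2]
  have hsum_eq : ∀ k, k ≠ j + 1 → ∑ i ∈ Finset.range k, q i = ∑ i ∈ Finset.range k, p i := by
    intro k hk
    rcases le_or_gt k (j + 1) with h|h
    · refine Finset.sum_congr rfl fun i hi => ?_
      rw [Finset.mem_range] at hi
      exact hqo i (by omega) (by omega)
    · exact sum_range_swap p j (j + 1) k (by omega) h
  have hqsum : ∑ i ∈ Finset.range n, q i = 1 := by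
    rw [hsum_eq n (by omega)]; exact hsum
  rw [Sn_eq h1 n (by omega) q hqsum, Sn_eq h1 n (by omega) p hsum]
  -- the partial sum before index j
  set t : ℝ := 1 - ∑ i ∈ Finset.range j, p i with htdef
  have hab : p j + p (j + 1) ≤ t := by
    have hsub : ∑ i ∈ Finset.range (j + 2), p i ≤ ∑ i ∈ Finset.range n, p i := by
      refine Finset.sum_le_sum_of_subset_of_nonneg
        (Finset.range_subset_range.mpr (by omega)) fun i hi _ => hp i (Finset.mem_range.mp hi)
    rw [Finset.sum_range_succ, Finset.sum_range_succ, hsum] at hsub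
    rw [htdef]; linarith
  have hB := lemB hsymm h0 h1 hassoc t (p j) (p (j + 1))
    (hp j (by omega)) (hp (j + 1) (by omega)) hab
  -- the four relevant terms
  have hTjq : SnTerm S q j = t * S (p (j + 1) / t) := by
    rw [SnTerm, hsum_eq j (by omega), hqj, ← htdef]
  have hTjp : SnTerm S p j = t * S (p j / t) := by rw [SnTerm, ← htdef]
  have hpartq : 1 - ∑ i ∈ Finset.range (j + 1), q i = t - p (j + 1) := by
    rw [Finset.sum_range_succ, hsum_eq j (by omega), hqj, htdef]; ring
  have hpartp : 1 - ∑ i ∈ Finset.range (j + 1), p i = t - p j := by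
    rw [Finset.sum_range_succ, htdef]; ring
  have hTj1q : SnTerm S q (j + 1) = (t - p (j + 1)) * S (p j / (t - p (j + 1))) := by
    rw [SnTerm, hpartq, hqj1]
  have hTj1p : SnTerm S p (j + 1) = (t - p j) * S (p (j + 1) / (t - p j)) := by
    rw [SnTerm, hpartp]
  have hdiff : ∑ k ∈ Finset.range n, (SnTerm S q k - SnTerm S p k) = 0 := by
    have hsubset : ({j, j + 1} : Finset ℕ) ⊆ Finset.range n := by
      intro x hx
      simp only [Finset.mem_insert, Finset.mem_singleton] at hx
      rcases hx with rfl|rfl <;> (rw [Finset.mem_range]; omega)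
    rw [← Finset.sum_subset hsubset ?_]
    · rw [Finset.sum_pair (by omega : j ≠ j + 1)]
      rw [hTjq, hTjp, hTj1q, hTj1p]
      linarith
    · intro k _ hk
      simp only [Finset.mem_insert, Finset.mem_singleton] at hk
      push_neg at hk
      rw [SnTerm, SnTerm, hsum_eq k hk.2, hqo k hk.1 hk.2, sub_self]
  rw [Finset.sum_sub_distrib] at hdiff
  linarith

lemma hp_swap (n : ℕ) (p : ℕ → ℝ) (hp : ∀ i < n, 0 ≤ p i) (u v : ℕ)
    (hu : u < n) (hv : v < n) : ∀ i < n, 0 ≤ (p ∘ Equiv.swap u v) i := by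
  intro i hi
  rcases eq_or_ne i u with rfl|h1
  · simpa [Equiv.swap_apply_left] using hp v hv
  rcases eq_or_ne i v with rfl|h2
  · simpa [Equiv.swap_apply_right] using hp u hu
  · simpa [Equiv.swap_apply_of_ne_of_ne h1 h2] using hp i hi

lemma hsum_swap (n : ℕ) (p : ℕ → ℝ) (hsum : ∑ i ∈ Finset.range n, p i = 1) (u v : ℕ)
    (hu : u < n) (hv : v < n) : ∑ i ∈ Finset.range n, (p ∘ Equiv.swap u v) i = 1 := by
  simp only [Function.comp_apply]
  rw [sum_range_swap p u v n hu hv]; exact hsum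

/-- Invariance of `Sn` under a transposition of indices `a < b < n`. -/
lemma Sn_swap_lt {S : ℝ → ℝ}
    (hsymm : ∀ p ∈ Set.Icc (0 : ℝ) 1, S p = S (1 - p))
    (h0 : S 0 = 0) (h1 : S 1 = 0)
    (hassoc : ∀ p₁ p₂ : ℝ, 0 ≤ p₁ → 0 ≤ p₂ → p₁ + p₂ ≤ 1 → p₁ < 1 → 0 < p₁ + p₂ →
      S p₁ + (1 - p₁) * S (p₂ / (1 - p₁)) =
        S (p₁ + p₂) + (p₁ + p₂) * S (p₁ / (p₁ + p₂)))
    (n : ℕ) : ∀ d a b : ℕ, b = a + d + 1 → b < n →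
    ∀ p : ℕ → ℝ, (∀ i < n, 0 ≤ p i) → ∑ i ∈ Finset.range n, p i = 1 →
    Sn S n (p ∘ Equiv.swap a b) = Sn S n p := by
  intro d
  induction d with
  | zero =>
    intro a b hb hbn p hp hsum
    subst hb
    exact Sn_adj hsymm h0 h1 hassoc n p hp hsum a hbn
  | succ d ih =>
    intro a b hb hbn p hp hsum
    set c := a + d + 1 with hc
    have hac : a ≠ c := by omega
    have hab : a ≠ b := by omega
    have hdecomp : Equiv.swap c b * Equiv.swap a c * Equiv.swap c b = Equiv.swap a b := by
      rw [Equiv.swap_mul_swap_mul_swap hac hab, Equiv.swap_comm]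
    set p1 : ℕ → ℝ := p ∘ Equiv.swap c b with hp1
    set p2 : ℕ → ℝ := p1 ∘ Equiv.swap a c with hp2
    have hcn : c < n := by omega
    have han : a < n := by omega
    have hp1p : ∀ i < n, 0 ≤ p1 i := hp_swap n p hp c b hcn hbn
    have hs1 : ∑ i ∈ Finset.range n, p1 i = 1 := hsum_swap n p hsum c b hcn hbn
    have hp2p : ∀ i < n, 0 ≤ p2 i := hp_swap n p1 hp1p a c han hcn
    have hs2 : ∑ i ∈ Finset.range n, p2 i = 1 := hsum_swap n p1 hs1 a c han hcn
    have hcb : b = c + 1 := by omega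
    have hcomp : p ∘ Equiv.swap a b = p2 ∘ Equiv.swap c b := by
      funext x
      have := congrArg (fun e : Equiv.Perm ℕ => p (e x)) hdecomp
      simpa [hp1, hp2, Equiv.Perm.mul_apply, Function.comp] using this.symm
    rw [hcomp, hcb]
    rw [Sn_adj hsymm h0 h1 hassoc n p2 hp2p hs2 c (by omega)]
    rw [hp2, ih a c (by omega) hcn p1 hp1p hs1]
    rw [hp1, hcb]
    exact Sn_adj hsymm h0 h1 hassoc n p hp hsum c (by omega)

/-- Invariance of `Sn` under any transposition of indices below `n`. -/
lemma Sn_swap {S : ℝ → ℝ}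
    (hsymm : ∀ p ∈ Set.Icc (0 : ℝ) 1, S p = S (1 - p))
    (h0 : S 0 = 0) (h1 : S 1 = 0)
    (hassoc : ∀ p₁ p₂ : ℝ, 0 ≤ p₁ → 0 ≤ p₂ → p₁ + p₂ ≤ 1 → p₁ < 1 → 0 < p₁ + p₂ →
      S p₁ + (1 - p₁) * S (p₂ / (1 - p₁)) =
        S (p₁ + p₂) + (p₁ + p₂) * S (p₁ / (p₁ + p₂)))
    (n a b : ℕ) (han : a < n) (hbn : b < n)
    (p : ℕ → ℝ) (hp : ∀ i < n, 0 ≤ p i) (hsum : ∑ i ∈ Finset.range n, p i = 1) :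
    Sn S n (p ∘ Equiv.swap a b) = Sn S n p := by
  rcases lt_trichotomy a b with h|h|h
  · exact Sn_swap_lt hsymm h0 h1 hassoc n (b - a - 1) a b (by omega) hbn p hp hsum
  · subst h; rw [Equiv.swap_self]; rfl
  · rw [Equiv.swap_comm]
    exact Sn_swap_lt hsymm h0 h1 hassoc n (a - b - 1) b a (by omega) han p hp hsum

/-- If `S` is continuous, concave, symmetric, vanishes at the endpoints, and satisfies
the binary associativity identity, then the `n`-ary extension `Sₙ` is symmetric on the
probability simplex. -/
theorem Sn_symmetric (S : ℝ → ℝ)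
    (hcont : ContinuousOn S (Set.Icc 0 1))
    (hconc : ConcaveOn ℝ (Set.Icc 0 1) S)
    (hsymm : ∀ p ∈ Set.Icc (0 : ℝ) 1, S p = S (1 - p))
    (h0 : S 0 = 0) (h1 : S 1 = 0)
    (hassoc : ∀ p₁ p₂ : ℝ, 0 ≤ p₁ → 0 ≤ p₂ → p₁ + p₂ ≤ 1 → p₁ < 1 → 0 < p₁ + p₂ →
      S p₁ + (1 - p₁) * S (p₂ / (1 - p₁)) =
        S (p₁ + p₂) + (p₁ + p₂) * S (p₁ / (p₁ + p₂)))
    (n : ℕ) (hn : 2 ≤ n) (p : ℕ → ℝ)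
    (hp : ∀ i < n, 0 ≤ p i) (hsum : ∑ i ∈ Finset.range n, p i = 1)
    (σ : Equiv.Perm ℕ) (hσ : ∀ i, n ≤ i → σ i = i) :
    Sn S n (p ∘ σ) = Sn S n p := by
  have H : ∀ m : ℕ, ∀ σ : Equiv.Perm ℕ, (∀ i, n ≤ i → σ i = i) →
      ((Finset.range n).filter (fun i => σ i ≠ i)).card ≤ m →
      ∀ p : ℕ → ℝ, (∀ i < n, 0 ≤ p i) → ∑ i ∈ Finset.range n, p i = 1 →
      Sn S n (p ∘ σ) = Sn S n p := by
    intro m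
    induction m with
    | zero =>
      intro σ hfix hcard p hp hsum
      have hid : ∀ i, σ i = i := by
        intro i
        by_cases h : n ≤ i
        · exact hfix i h
        · by_contra hne
          have hmem : i ∈ (Finset.range n).filter (fun i => σ i ≠ i) := by
            simp [Finset.mem_filter, Finset.mem_range]
            exact ⟨by omega, hne⟩
          have := Finset.card_pos.mpr ⟨i, hmem⟩
          omega
      have : p ∘ ⇑σ = p := funext fun i => by simp [hid i]
      rw [this]
    | succ m ih =>
      intro σ hfix hcard p hp hsum
      by_cases hid : ∀ i, σ i = i
      · have : p ∘ ⇑σ = p := funext fun i => by simp [hid i]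
        rw [this]
      · push_neg at hid
        obtain ⟨a, ha⟩ := hid
        have han : a < n := by
          by_contra h
          exact ha (hfix a (by omega))
        set b := σ a with hbdef
        have hbn : b < n := by
          by_contra h
          have : σ b = b := hfix b (by omega)
          exact ha (σ.injective this)
        have hba : b ≠ a := fun h => ha h
        set τ := Equiv.swap a b with hτ
        set σ' := τ * σ with hσ'
        have hσ'a : σ' a = a := by
          simp [hσ', Equiv.Perm.mul_apply, hτ, ← hbdef, Equiv.swap_apply_right]
        have hmoved : ∀ i, σ' i ≠ i → σ i ≠ i ∧ i ≠ a := by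
          intro i hi
          constructor
          · intro h
            apply hi
            simp only [hσ', Equiv.Perm.mul_apply, h, hτ]
            rcases eq_or_ne i a with rfl|h1
            · exact absurd h ha
            rcases eq_or_ne i b with rfl|h2
            · exact absurd (σ.injective (h.trans hbdef)) hba
            · exact Equiv.swap_apply_of_ne_of_ne h1 h2
          · intro h; subst h; exact hi hσ'a
        have hfix' : ∀ i, n ≤ i → σ' i = i := by
          intro i hi
          simp only [hσ', Equiv.Perm.mul_apply, hfix i hi, hτ]
          exact Equiv.swap_apply_of_ne_of_ne (by omega) (by omega)
        have hcard' : ((Finset.range n).filter (fun i => σ' i ≠ i)).card ≤ m := by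
          have hsub : (Finset.range n).filter (fun i => σ' i ≠ i) ⊆
              ((Finset.range n).filter (fun i => σ i ≠ i)).erase a := by
            intro i hi
            rw [Finset.mem_filter] at hi
            obtain ⟨h1, h2⟩ := hmoved i hi.2
            rw [Finset.mem_erase, Finset.mem_filter]
            exact ⟨h2, hi.1, h1⟩
          have hamem : a ∈ (Finset.range n).filter (fun i => σ i ≠ i) := by
            rw [Finset.mem_filter, Finset.mem_range]; exact ⟨han, ha⟩
          have := Finset.card_le_card hsub
          rw [Finset.card_erase_of_mem hamem] at this
          have hpos := Finset.card_pos.mpr ⟨a, hamem⟩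
          omega
        have hcomp : p ∘ ⇑σ = (p ∘ ⇑τ) ∘ ⇑σ' := by
          funext x
          simp only [Function.comp_apply, hσ', Equiv.Perm.mul_apply, hτ,
            Equiv.swap_apply_self]
        rw [hcomp]
        rw [ih σ' hfix' hcard' (p ∘ ⇑τ)
          (hp_swap n p hp a b han hbn) (hsum_swap n p hsum a b han hbn)]
        exact Sn_swap hsymm h0 h1 hassoc n a b han hbn p hp hsum
  exact H _ σ hσ le_rfl p hp hsum
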